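/- The set of monomials {a^i b^j : i, j ≥ 0} (images in B of the words a^i b^j of the free algebra) is a basis of B as a k-vector space. -/

import Mathlib

/-!
STATEMENT 0: The set of monomials {a^i b^j : i, j ≥ 0} (images in B of the words
a^i b^j of the free algebra) is a basis of B as a k-vector space, where
B = k⟨a,b⟩/(ba − ab − (1/2)a²) over a field k of characteristic p > 2.
-/

noncomputable section

variable (k : Type*) [Field k]

/-- The generator `a` of the free algebra `k⟨a,b⟩`. -/
def aF : FreeAlgebra k (Fin 2) := FreeAlgebra.ι k 0

/-- The generator `b` of the free algebra `k⟨a,b⟩`. -/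
def bF : FreeAlgebra k (Fin 2) := FreeAlgebra.ι k 1

/-- The defining relation `ba = ab + (1/2)a²` of `B`. -/
inductive BRel : FreeAlgebra k (Fin 2) → FreeAlgebra k (Fin 2) → Prop
  | rel : BRel (bF k * aF k) (aF k * bF k + (2 : k)⁻¹ • aF k ^ 2)

/-- The algebra `B = k⟨a,b⟩/(ba − ab − (1/2)a²)`. -/
abbrev B := RingQuot (BRel k)

/-- The image of `a` in `B`. -/
def aB : B k := RingQuot.mkAlgHom k (BRel k) (aF k)

/-- The image of `b` in `B`. -/
def bB : B k := RingQuot.mkAlgHom k (BRel k) (bF k)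

open MvPolynomial

/-- Representation of `a`: multiplication by `X 0`. -/
def ρa : Module.End k (MvPolynomial (Fin 2) k) := LinearMap.mulLeft k (X 0)

/-- Representation of `b`: `(1/2)·X₀²·∂₀ + X₁·`. -/
def ρb : Module.End k (MvPolynomial (Fin 2) k) :=
  (2 : k)⁻¹ • (LinearMap.mulLeft k (X 0 ^ 2) ∘ₗ (pderiv 0).toLinearMap)
    + LinearMap.mulLeft k (X 1)

lemma ρ_rel : ρb k * ρa k = ρa k * ρb k + (2 : k)⁻¹ • (ρa k) ^ 2 := by
  refine LinearMap.ext fun f => ?_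
  simp only [ρa, ρb, Module.End.mul_apply, LinearMap.add_apply, LinearMap.smul_apply,
    LinearMap.comp_apply, LinearMap.mulLeft_apply, pderiv_mul,
    pderiv_X_self, pow_two, Derivation.coeFn_coe, smul_eq_C_mul]
  ring

/-- The map from the free algebra to endomorphisms of `k[x,y]`. -/
def ρF : FreeAlgebra k (Fin 2) →ₐ[k] Module.End k (MvPolynomial (Fin 2) k) :=
  FreeAlgebra.lift k ![ρa k, ρb k]

lemma ρF_rel : ∀ ⦃x y⦄, BRel k x y → ρF k x = ρF k y := by
  rintro _ _ ⟨⟩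
  simp only [ρF, aF, bF, map_mul, map_add, map_smul, map_pow, FreeAlgebra.lift_ι_apply,
    Matrix.cons_val_zero, Matrix.cons_val_one, Matrix.head_cons]
  exact ρ_rel k

/-- The induced representation of `B` on `k[x,y]`. -/
def ρ : B k →ₐ[k] Module.End k (MvPolynomial (Fin 2) k) :=
  RingQuot.liftAlgHom k ⟨ρF k, ρF_rel k⟩

lemma ρ_aB : ρ k (aB k) = ρa k := by
  rw [ρ, aB, RingQuot.liftAlgHom_mkAlgHom_apply]
  simp [ρF, aF]

lemma ρ_bB : ρ k (bB k) = ρb k := by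
  rw [ρ, bB, RingQuot.liftAlgHom_mkAlgHom_apply]
  simp [ρF, bF]

/-- Evaluation of the representation at `1`. -/
def φ : B k →ₗ[k] MvPolynomial (Fin 2) k where
  toFun x := ρ k x 1
  map_add' x y := by simp
  map_smul' c x := by simp

lemma ρb_pow_one (j : ℕ) : ((ρb k) ^ j) 1 = X 1 ^ j := by
  induction j with
  | zero => simp
  | succ n ih =>
    rw [pow_succ', Module.End.mul_apply, ih, ρb]
    have : (pderiv (R := k) (σ := Fin 2) 0) (X 1 ^ n) = 0 := by
      rw [Derivation.leibniz_pow]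
      classical
      rw [pderiv_X]
      simp
    simp [this, pow_succ, mul_comm]

lemma ρa_pow (i : ℕ) (q : MvPolynomial (Fin 2) k) : ((ρa k) ^ i) q = X 0 ^ i * q := by
  induction i with
  | zero => simp
  | succ n ih =>
    rw [pow_succ', Module.End.mul_apply, ih, ρa, LinearMap.mulLeft_apply, pow_succ']
    ring

lemma φ_monomial (i j : ℕ) : φ k (aB k ^ i * bB k ^ j) = X 0 ^ i * X 1 ^ j := by
  show ρ k (aB k ^ i * bB k ^ j) 1 = _
  rw [map_mul, map_pow, map_pow, ρ_aB, ρ_bB, Module.End.mul_apply, ρb_pow_one, ρa_pow]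

/-- The exponent map into `Fin 2 →₀ ℕ`. -/
def expMap (ij : ℕ × ℕ) : Fin 2 →₀ ℕ := Finsupp.single 0 ij.1 + Finsupp.single 1 ij.2

lemma expMap_injective : Function.Injective (expMap) := by
  rintro ⟨i, j⟩ ⟨i', j'⟩ h
  have h0 := DFunLike.congr_fun h 0
  have h1 := DFunLike.congr_fun h 1
  simp only [expMap, Finsupp.coe_add, Pi.add_apply, Finsupp.single_eq_same,
    Finsupp.single_eq_of_ne (show (1 : Fin 2) ≠ 0 by decide),
    Finsupp.single_eq_of_ne (show (0 : Fin 2) ≠ 1 by decide), add_zero, zero_add] at h0 h1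
  exact Prod.ext h0 h1

lemma monomials_li : LinearIndependent k
    (fun ij : ℕ × ℕ => (X 0 : MvPolynomial (Fin 2) k) ^ ij.1 * X 1 ^ ij.2) := by
  have h : (fun ij : ℕ × ℕ => (X 0 : MvPolynomial (Fin 2) k) ^ ij.1 * X 1 ^ ij.2)
      = (basisMonomials (Fin 2) k) ∘ expMap := by
    funext ij
    simp only [Function.comp_apply, coe_basisMonomials, expMap]
    rw [← mul_one (1 : k), ← monomial_mul, ← X_pow_eq_monomial, ← X_pow_eq_monomial]
  rw [h]
  exact (basisMonomials (Fin 2) k).linearIndependent.comp expMap expMap_injective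

lemma li : LinearIndependent k (fun ij : ℕ × ℕ => aB k ^ ij.1 * bB k ^ ij.2) := by
  apply LinearIndependent.of_comp (φ k)
  have h : (φ k) ∘ (fun ij : ℕ × ℕ => aB k ^ ij.1 * bB k ^ ij.2)
      = fun ij : ℕ × ℕ => (X 0 : MvPolynomial (Fin 2) k) ^ ij.1 * X 1 ^ ij.2 := by
    funext ij; exact φ_monomial k ij.1 ij.2
  rw [h]
  exact monomials_li k

lemma rel_in_B : bB k * aB k = aB k * bB k + (2 : k)⁻¹ • aB k ^ 2 := by
  have h := RingQuot.mkAlgHom_rel k (BRel.rel (k := k))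
  simpa only [map_mul, map_add, map_smul, map_pow, aB, bB] using h

lemma comm_pow (i : ℕ) :
    bB k * aB k ^ i = aB k ^ i * bB k + ((i : k) * (2 : k)⁻¹) • aB k ^ (i + 1) := by
  induction i with
  | zero => simp
  | succ n ih =>
    have : bB k * aB k ^ (n + 1) = (bB k * aB k ^ n) * aB k := by
      rw [mul_assoc, pow_succ]
    rw [this, ih, add_mul, mul_assoc, rel_in_B, smul_mul_assoc, ← pow_succ,
      mul_add, ← mul_assoc, ← pow_succ, mul_smul_comm, ← pow_add]
    have h2 : n + 2 = n + 1 + 1 := rfl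
    rw [h2, add_assoc, ← add_smul]
    congr 2
    push_cast
    ring

lemma span_top : ⊤ ≤ Submodule.span k (Set.range (fun ij : ℕ × ℕ => aB k ^ ij.1 * bB k ^ ij.2)) := by
  set S := Submodule.span k (Set.range (fun ij : ℕ × ℕ => aB k ^ ij.1 * bB k ^ ij.2)) with hS
  have hmono : ∀ i j : ℕ, aB k ^ i * bB k ^ j ∈ S :=
    fun i j => Submodule.subset_span ⟨(i, j), rfl⟩
  have hone : (1 : B k) ∈ S := by simpa using hmono 0 0
  have ha : ∀ s ∈ S, aB k * s ∈ S := by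
    intro s hs
    induction hs using Submodule.span_induction with
    | mem x hx =>
      obtain ⟨⟨i, j⟩, rfl⟩ := hx
      have : aB k * (aB k ^ i * bB k ^ j) = aB k ^ (i + 1) * bB k ^ j := by
        rw [← mul_assoc, ← pow_succ']
      rw [this]; exact hmono _ _
    | zero => simpa using Submodule.zero_mem S
    | add x y _ _ hx hy => rw [mul_add]; exact Submodule.add_mem S hx hy
    | smul c x _ hx => rw [mul_smul_comm]; exact Submodule.smul_mem S c hx
  have hb : ∀ s ∈ S, bB k * s ∈ S := by
    intro s hs
    induction hs using Submodule.span_induction with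
    | mem x hx =>
      obtain ⟨⟨i, j⟩, rfl⟩ := hx
      have : bB k * (aB k ^ i * bB k ^ j)
          = aB k ^ i * bB k ^ (j + 1) + ((i : k) * (2 : k)⁻¹) • (aB k ^ (i + 1) * bB k ^ j) := by
        rw [← mul_assoc, comm_pow, add_mul, mul_assoc, ← pow_succ', smul_mul_assoc]
      rw [this]
      exact Submodule.add_mem S (hmono _ _) (Submodule.smul_mem S _ (hmono _ _))
    | zero => simpa using Submodule.zero_mem S
    | add x y _ _ hx hy => rw [mul_add]; exact Submodule.add_mem S hx hy
    | smul c x _ hx => rw [mul_smul_comm]; exact Submodule.smul_mem S c hx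
  intro x _
  obtain ⟨y, rfl⟩ := RingQuot.mkAlgHom_surjective k (BRel k) x
  have key : ∀ y : FreeAlgebra k (Fin 2), ∀ s ∈ S,
      RingQuot.mkAlgHom k (BRel k) y * s ∈ S := by
    intro y
    induction y with
    | grade0 r =>
      intro s hs
      rw [AlgHom.commutes, ← Algebra.smul_def]
      exact Submodule.smul_mem S r hs
    | grade1 x =>
      intro s hs
      fin_cases x
      · exact ha s hs
      · exact hb s hs
    | mul u v hu hv =>
      intro s hs
      rw [map_mul, mul_assoc]
      exact hu _ (hv s hs)
    | add u v hu hv =>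
      intro s hs
      rw [map_add, add_mul]
      exact Submodule.add_mem S (hu s hs) (hv s hs)
  simpa using key y 1 hone

theorem monomials_basis_of_B (p : ℕ) [CharP k p] (hp : 2 < p) :
    ∃ 𝒷 : Module.Basis (ℕ × ℕ) k (B k), ∀ ij : ℕ × ℕ, 𝒷 ij = aB k ^ ij.1 * bB k ^ ij.2 := by
  refine ⟨Module.Basis.mk (li k) (span_top k), fun ij => ?_⟩
  rw [Module.Basis.mk_apply]

end
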